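/- Let (a_i)_{i∈ℕ} be a summable sequence of nonnegative real numbers with Σ_i a_i = 2/3, and let (d_i)_{i∈ℕ} be a sequence of real numbers with 0 ≤ d_i ≤ M for some constant M. Then the ratio (Σ_i a_i · ∫₀^Λ p/(d_i + p² + p) dp) / log(1 + Λ) tends to 2/3 as Λ → ∞. -/

import Mathlib

open Filter intervalIntegral MeasureTheory

lemma aux_point_upper {d p : ℝ} (hd : 0 ≤ d) (hp : 0 ≤ p) :
    p / (d + p ^ 2 + p) ≤ 1 / (1 + p) := by
  rcases eq_or_lt_of_le hp with h | h
  · simp [← h]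
  · have h1 : 0 < d + p ^ 2 + p := by nlinarith
    rw [div_le_div_iff₀ h1 (by linarith)]
    nlinarith

lemma aux_point_lower {d M p : ℝ} (hd : 0 ≤ d) (hdM : d ≤ M) (hM : 1 ≤ M) (hp : 0 ≤ p) :
    1 / (1 + p) - M / (M + p ^ 2 + p) ≤ p / (d + p ^ 2 + p) := by
  rcases eq_or_lt_of_le hp with h | h
  · have hM0 : M ≠ 0 := by linarith
    simp [← h, hM0]
  · have hdp : 0 < d + p ^ 2 + p := by nlinarith
    have hMp : 0 < M + p ^ 2 + p := by nlinarith
    have h1p : (0:ℝ) < 1 + p := by linarith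
    rw [sub_le_iff_le_add, div_add_div _ _ hdp.ne' hMp.ne',
      div_le_div_iff₀ h1p (by positivity)]
    have hM0 : (0:ℝ) ≤ M := by linarith
    nlinarith [mul_nonneg (sub_nonneg.2 hdM) (by positivity : (0:ℝ) ≤ p ^ 2 + p),
      mul_nonneg (mul_nonneg h.le hM0) hd,
      mul_nonneg (mul_nonneg h.le hM0) (by positivity : (0:ℝ) ≤ p ^ 2 + p)]

lemma aux_f_intable {d Λ : ℝ} (hd : 0 ≤ d) (hΛ : 0 ≤ Λ) :
    IntervalIntegrable (fun p => p / (d + p ^ 2 + p)) volume 0 Λ := by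
  apply IntervalIntegrable.mono_fun' (g := fun _ => (1:ℝ)) intervalIntegrable_const
  · exact (measurable_id.div ((measurable_const.add (measurable_id.pow_const 2)).add
      measurable_id)).aestronglyMeasurable
  · filter_upwards [ae_restrict_mem measurableSet_uIoc] with p hp
    rw [Set.uIoc_of_le hΛ] at hp
    have hp0 : 0 < p := hp.1
    rw [Real.norm_eq_abs, abs_of_nonneg (div_nonneg hp0.le (by positivity))]
    calc p / (d + p ^ 2 + p) ≤ 1 / (1 + p) := aux_point_upper hd hp0.le
      _ ≤ 1 := by rw [div_le_one (by linarith)]; linarith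

lemma aux_one_add_inv_intable {Λ : ℝ} (hΛ : 0 ≤ Λ) :
    IntervalIntegrable (fun p : ℝ => 1 / (1 + p)) volume 0 Λ := by
  apply ContinuousOn.intervalIntegrable
  apply ContinuousOn.div continuousOn_const (by fun_prop)
  intro p hp
  rw [Set.uIcc_of_le hΛ] at hp
  have := hp.1
  positivity

lemma aux_integral_one_add_inv {Λ : ℝ} (hΛ : 0 ≤ Λ) :
    ∫ p in (0:ℝ)..Λ, 1 / (1 + p) = Real.log (1 + Λ) := by
  simp only [one_div]
  rw [show (∫ p in (0:ℝ)..Λ, (1 + p)⁻¹) = ∫ p in (1:ℝ)..(1+Λ), p⁻¹ by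
    simpa using intervalIntegral.integral_comp_add_left (a := 0) (b := Λ) (fun x => x⁻¹) 1]
  rw [integral_inv (by
    intro h
    rcases Set.mem_uIcc.1 h with ⟨h1, _⟩ | ⟨_, h2⟩ <;> linarith)]
  simp

lemma aux_zpow_eq : (fun p:ℝ => p ^ (-2:ℤ)) = fun p:ℝ => 1 / p ^ 2 := by
  funext p
  rw [zpow_neg, one_div]
  norm_cast

lemma aux_h_cont {M : ℝ} (hM : 1 ≤ M) : Continuous (fun p : ℝ => M / (M + p ^ 2 + p)) := by
  apply continuous_const.div (by fun_prop)
  intro p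
  nlinarith [sq_nonneg (p + 1/2)]

lemma aux_corr_bound {M Λ : ℝ} (hM : 1 ≤ M) (hΛ : 1 ≤ Λ) :
    ∫ p in (0:ℝ)..Λ, M / (M + p ^ 2 + p) ≤ 1 + M := by
  have h01 : IntervalIntegrable (fun p : ℝ => M / (M + p ^ 2 + p)) volume 0 1 :=
    (aux_h_cont hM).intervalIntegrable _ _
  have h1Λ : IntervalIntegrable (fun p : ℝ => M / (M + p ^ 2 + p)) volume 1 Λ :=
    (aux_h_cont hM).intervalIntegrable _ _
  rw [← integral_add_adjacent_intervals h01 h1Λ]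
  have b1 : (∫ p in (0:ℝ)..1, M / (M + p ^ 2 + p)) ≤ 1 := by
    calc (∫ p in (0:ℝ)..1, M / (M + p ^ 2 + p)) ≤ ∫ _ in (0:ℝ)..1, (1:ℝ) := by
          apply integral_mono_on zero_le_one h01 intervalIntegrable_const
          intro p hp
          rw [div_le_one (by nlinarith [hp.1, sq_nonneg p])]
          nlinarith [hp.1, sq_nonneg p]
      _ = 1 := by simp
  have b2 : (∫ p in (1:ℝ)..Λ, M / (M + p ^ 2 + p)) ≤ M := by
    have hint2 : IntervalIntegrable (fun p : ℝ => M * (1 / p ^ 2)) volume 1 Λ := by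
      apply ContinuousOn.intervalIntegrable
      apply continuousOn_const.mul
      apply ContinuousOn.div continuousOn_const (by fun_prop)
      intro p hp
      rw [Set.uIcc_of_le hΛ] at hp
      have := hp.1
      positivity
    calc (∫ p in (1:ℝ)..Λ, M / (M + p ^ 2 + p)) ≤ ∫ p in (1:ℝ)..Λ, M * (1 / p ^ 2) := by
          apply integral_mono_on hΛ h1Λ hint2
          intro p hp
          have hp1 : 1 ≤ p := hp.1
          rw [mul_one_div]
          apply div_le_div_of_nonneg_left (by linarith) (by positivity)
          nlinarith
      _ = M * (1 - Λ⁻¹) := by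
          rw [intervalIntegral.integral_const_mul, ← aux_zpow_eq, integral_zpow (by
            right
            refine ⟨by decide, fun h => ?_⟩
            rcases Set.mem_uIcc.1 h with ⟨h1, _⟩ | ⟨_, h2⟩ <;> linarith)]
          norm_num
          exact Or.inl (by ring)
      _ ≤ M := by
          have h1 : (0:ℝ) < Λ⁻¹ := by positivity
          nlinarith
  linarith

/-- If `(a i)` are nonnegative, summable with sum `2/3`, and `0 ≤ d i ≤ M`, then
`(Σ_i a_i ∫₀^Λ p/(d_i + p² + p) dp) / log(1 + Λ) → 2/3` as `Λ → ∞`. This is the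
analytic content of `(8π/3) log(1+Λ)/F(Λ) → 1` for the radiative-correction
function `F`. -/
theorem tsum_integral_div_log_tendsto (a d : ℕ → ℝ) (M : ℝ)
    (ha : ∀ i, 0 ≤ a i) (hsum : Summable a) (htot : ∑' i, a i = 2 / 3)
    (hd0 : ∀ i, 0 ≤ d i) (hdM : ∀ i, d i ≤ M) :
    Tendsto (fun Λ : ℝ =>
        (∑' i, a i * ∫ p in (0 : ℝ)..Λ, p / (d i + p ^ 2 + p)) / Real.log (1 + Λ))
      atTop (nhds (2 / 3)) := by
  set M' : ℝ := max M 1 with hM'def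
  have hM' : 1 ≤ M' := le_max_right _ _
  have hdM' : ∀ i, d i ≤ M' := fun i => (hdM i).trans (le_max_left _ _)
  set C : ℝ := 1 + M' with hCdef
  -- upper and lower bounds on each integral, for Λ ≥ 1
  have Iup : ∀ (Λ : ℝ), 1 ≤ Λ → ∀ i,
      (∫ p in (0:ℝ)..Λ, p / (d i + p ^ 2 + p)) ≤ Real.log (1 + Λ) := by
    intro Λ hΛ i
    have hΛ0 : (0:ℝ) ≤ Λ := by linarith
    rw [← aux_integral_one_add_inv hΛ0]
    apply integral_mono_on hΛ0 (aux_f_intable (hd0 i) hΛ0) (aux_one_add_inv_intable hΛ0)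
    intro p hp
    exact aux_point_upper (hd0 i) hp.1
  have Ilow : ∀ (Λ : ℝ), 1 ≤ Λ → ∀ i,
      Real.log (1 + Λ) - C ≤ ∫ p in (0:ℝ)..Λ, p / (d i + p ^ 2 + p) := by
    intro Λ hΛ i
    have hΛ0 : (0:ℝ) ≤ Λ := by linarith
    have key : (∫ p in (0:ℝ)..Λ, (1 / (1 + p) - M' / (M' + p ^ 2 + p)))
        ≤ ∫ p in (0:ℝ)..Λ, p / (d i + p ^ 2 + p) := by
      apply integral_mono_on hΛ0
        ((aux_one_add_inv_intable hΛ0).sub ((aux_h_cont hM').intervalIntegrable _ _))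
        (aux_f_intable (hd0 i) hΛ0)
      intro p hp
      exact aux_point_lower (hd0 i) (hdM' i) hM' hp.1
    rw [integral_sub (aux_one_add_inv_intable hΛ0)
      ((aux_h_cont hM').intervalIntegrable _ _), aux_integral_one_add_inv hΛ0] at key
    have := aux_corr_bound hM' hΛ
    linarith
  -- nonnegativity of the integrals
  have Inn : ∀ (Λ : ℝ), 0 ≤ Λ → ∀ i,
      0 ≤ ∫ p in (0:ℝ)..Λ, p / (d i + p ^ 2 + p) := by
    intro Λ hΛ0 i
    apply integral_nonneg hΛ0
    intro p hp
    exact div_nonneg hp.1 (by nlinarith [hd0 i, hp.1, sq_nonneg p])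
  -- summability of the series for Λ ≥ 1
  have hJsum : ∀ (Λ : ℝ), 1 ≤ Λ →
      Summable (fun i => a i * ∫ p in (0:ℝ)..Λ, p / (d i + p ^ 2 + p)) := by
    intro Λ hΛ
    apply Summable.of_nonneg_of_le
      (fun i => mul_nonneg (ha i) (Inn Λ (by linarith) i))
      (fun i => mul_le_mul_of_nonneg_left (Iup Λ hΛ i) (ha i))
      (hsum.mul_right _)
  -- bounds on the sum
  have Sup : ∀ (Λ : ℝ), 1 ≤ Λ →
      (∑' i, a i * ∫ p in (0:ℝ)..Λ, p / (d i + p ^ 2 + p)) ≤ 2/3 * Real.log (1 + Λ) := by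
    intro Λ hΛ
    calc (∑' i, a i * ∫ p in (0:ℝ)..Λ, p / (d i + p ^ 2 + p))
        ≤ ∑' i, a i * Real.log (1 + Λ) :=
          Summable.tsum_le_tsum (fun i => mul_le_mul_of_nonneg_left (Iup Λ hΛ i) (ha i))
            (hJsum Λ hΛ) (hsum.mul_right _)
      _ = 2/3 * Real.log (1 + Λ) := by rw [tsum_mul_right, htot]
  have Slow : ∀ (Λ : ℝ), 1 ≤ Λ →
      2/3 * (Real.log (1 + Λ) - C) ≤
        ∑' i, a i * ∫ p in (0:ℝ)..Λ, p / (d i + p ^ 2 + p) := by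
    intro Λ hΛ
    calc 2/3 * (Real.log (1 + Λ) - C) = ∑' i, a i * (Real.log (1 + Λ) - C) := by
          rw [tsum_mul_right, htot]
      _ ≤ ∑' i, a i * ∫ p in (0:ℝ)..Λ, p / (d i + p ^ 2 + p) :=
          Summable.tsum_le_tsum (fun i => mul_le_mul_of_nonneg_left (Ilow Λ hΛ i) (ha i))
            (hsum.mul_right _) (hJsum Λ hΛ)
  -- log tends to infinity
  have hlog : Tendsto (fun Λ : ℝ => Real.log (1 + Λ)) atTop atTop :=
    Real.tendsto_log_atTop.comp (tendsto_atTop_add_const_left atTop 1 tendsto_id)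
  -- squeeze
  apply tendsto_of_tendsto_of_tendsto_of_le_of_le'
    (g := fun Λ : ℝ => 2/3 - (2/3 * C) / Real.log (1 + Λ))
    (h := fun _ : ℝ => (2:ℝ)/3)
  · have : Tendsto (fun Λ : ℝ => (2/3 * C) / Real.log (1 + Λ)) atTop (nhds 0) :=
      Tendsto.div_atTop tendsto_const_nhds hlog
    simpa using Tendsto.sub (tendsto_const_nhds : Tendsto (fun _ : ℝ => (2:ℝ)/3) atTop _) this
  · exact tendsto_const_nhds
  · filter_upwards [eventually_ge_atTop (1:ℝ)] with Λ hΛ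
    have hlp : 0 < Real.log (1 + Λ) := Real.log_pos (by linarith)
    rw [sub_le_iff_le_add, ← add_div, le_div_iff₀ hlp]
    have := Slow Λ hΛ
    have hexp : (2/3 * (Real.log (1 + Λ) - C)) = 2/3 * Real.log (1+Λ) - 2/3*C := by ring
    nlinarith [this]
  · filter_upwards [eventually_ge_atTop (1:ℝ)] with Λ hΛ
    have hlp : 0 < Real.log (1 + Λ) := Real.log_pos (by linarith)
    rw [div_le_iff₀ hlp]
    exact Sup Λ hΛ
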